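/- Let w, y, g be vectors in EuclideanSpace ℝ (Fin d) and b ≥ 0 a real, with ⟪w, y⟫ > b, ⟪w, g⟫ = 0, y + g ≠ 0 and ‖y + g‖ < ‖y‖. Then the probability (under P) that a noise vector η satisfies ⟪w + η, y + g⟫ > b is strictly greater than the probability that ⟪w + η, y⟫ > b: the robustness conclusion extends to decision boundaries with nonzero offset b, provided the margin of y exceeds b. -/

import Mathlib

/-!
STATEMENT 10: With `P` the isotropic Gaussian (covariance `s² I`) on `Fin d → ℝ`, `b ≥ 0`,
`⟪w, y⟫ > b`, `⟪w, g⟫ = 0`, `y + g ≠ 0` and `‖y + g‖ < ‖y‖`, the probability that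
`⟪w + η, y + g⟫ > b` is strictly greater than the probability that `⟪w + η, y⟫ > b`.
-/

open MeasureTheory ProbabilityTheory RealInnerProductSpace Set
open scoped NNReal ENNReal

lemma lintegral_pi_prod {n : ℕ} (μ : Fin n → Measure ℝ) [∀ i, SigmaFinite (μ i)]
    (f : Fin n → ℝ → ℝ≥0∞) (hf : ∀ i, Measurable (f i)) :
    ∫⁻ x, ∏ i, f i (x i) ∂(Measure.pi μ) = ∏ i, ∫⁻ x, f i x ∂(μ i) := by
  induction n with
  | zero => simp [Measure.pi_of_empty, lintegral_dirac]
  | succ n ih =>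
    have h := (measurePreserving_piFinSuccAbove μ 0).symm
    rw [← h.lintegral_comp_emb (MeasurableEquiv.measurableEmbedding _)
      (fun x => ∏ i, f i (x i))]
    simp_rw [MeasurableEquiv.piFinSuccAbove_symm_apply, Fin.insertNthEquiv,
      Fin.prod_univ_succ, Fin.insertNth_zero]
    simp only [Fin.zero_succAbove, cast_eq, Equiv.coe_fn_mk, Fin.cons_zero, Fin.cons_succ]
    have hg : Measurable fun y : Fin n → ℝ => ∏ i, f i.succ (y i) :=
      Finset.measurable_prod Finset.univ
        (fun (i : Fin n) (_ : i ∈ Finset.univ) =>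
          (hf i.succ).comp (measurable_pi_apply i))
    have hmul := lintegral_prod_mul (μ := μ 0) (ν := Measure.pi fun j => μ j.succ)
      (f := f 0) (g := fun y : Fin n → ℝ => ∏ i, f i.succ (y i)) (hf 0).aemeasurable
      hg.aemeasurable
    rw [hmul, ih (fun i => μ i.succ) (fun i => f i.succ) (fun i => hf i.succ)]

lemma pi_gaussian_eq_withDensity (d : ℕ) (V : ℝ≥0) (hV : V ≠ 0) :
    (Measure.pi fun _ : Fin d => gaussianReal 0 V) =
      (volume : Measure (Fin d → ℝ)).withDensity (fun x => ∏ i, gaussianPDF 0 V (x i)) := by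
  refine Measure.pi_eq fun t ht => ?_
  rw [withDensity_apply _ (MeasurableSet.univ_pi ht),
    ← lintegral_indicator (MeasurableSet.univ_pi ht) _]
  have hind : ∀ x : Fin d → ℝ,
      (Set.pi univ t).indicator (fun x => ∏ i, gaussianPDF 0 V (x i)) x
        = ∏ i, (t i).indicator (gaussianPDF 0 V) (x i) := by
    intro x
    by_cases hx : x ∈ Set.pi univ t
    · rw [indicator_of_mem hx]
      exact Finset.prod_congr rfl fun i _ => (indicator_of_mem (hx i (mem_univ i)) _).symm
    · rw [indicator_of_notMem hx]
      rw [Set.mem_univ_pi] at hx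
      push_neg at hx
      obtain ⟨i, hi⟩ := hx
      exact (Finset.prod_eq_zero (Finset.mem_univ i) (by rw [indicator_of_notMem hi])).symm
  simp_rw [hind]
  rw [volume_pi, lintegral_pi_prod _ _
    (fun i => (measurable_gaussianPDF 0 V).indicator (ht i))]
  refine Finset.prod_congr rfl fun i _ => ?_
  rw [lintegral_indicator (ht i) _, ← withDensity_apply _ (ht i),
    ← gaussianReal_of_var_ne_zero 0 hV]

lemma prod_gaussianPDF_eq (V : ℝ≥0) {d : ℕ} (x : Fin d → ℝ) :
    ∏ i, gaussianPDF 0 V (x i)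
      = ENNReal.ofReal ((Real.sqrt (2 * Real.pi * V))⁻¹ ^ d
          * Real.exp (-(∑ i, (x i) ^ 2) / (2 * V))) := by
  have h : ∀ i : Fin d, gaussianPDF 0 V (x i)
      = ENNReal.ofReal ((Real.sqrt (2 * Real.pi * V))⁻¹ * Real.exp (-(x i) ^ 2 / (2 * V))) := by
    intro i
    simp [gaussianPDF_def, gaussianPDFReal]
  simp_rw [h]
  rw [← ENNReal.ofReal_prod_of_nonneg (fun i _ => by positivity)]
  congr 1
  rw [Finset.prod_mul_distrib, Finset.prod_const, Finset.card_univ, Fintype.card_fin,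
    ← Real.exp_sum]
  congr 1
  rw [← Finset.sum_div, ← Finset.sum_neg_distrib]

lemma gaussian_Ioi_strict_anti (V : ℝ≥0) (hV : V ≠ 0) {a b : ℝ} (h : a < b) :
    gaussianReal 0 V (Ioi b) < gaussianReal 0 V (Ioi a) := by
  have h1 : Ioi a = Ioc a b ∪ Ioi b := (Ioc_union_Ioi_eq_Ioi h.le).symm
  rw [h1, measure_union (Ioc_disjoint_Ioi le_rfl) measurableSet_Ioi]
  have hpos : gaussianReal 0 V (Ioc a b) ≠ 0 := by
    intro h0
    rw [gaussianReal_of_var_ne_zero _ hV,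
      withDensity_apply_eq_zero (measurable_gaussianPDF _ _)] at h0
    have heq : {x | gaussianPDF 0 V x ≠ 0} ∩ Ioc a b = Ioc a b :=
      inter_eq_self_of_subset_right fun x _ => (gaussianPDF_pos 0 hV x).ne'
    rw [heq, Real.volume_Ioc, ENNReal.ofReal_eq_zero] at h0
    linarith
  calc gaussianReal 0 V (Ioi b)
      < gaussianReal 0 V (Ioi b) + gaussianReal 0 V (Ioc a b) :=
        ENNReal.lt_add_right (measure_ne_top _ _) hpos
    _ = gaussianReal 0 V (Ioc a b) + gaussianReal 0 V (Ioi b) := add_comm _ _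

lemma pi_gaussian_eval (d : ℕ) (V : ℝ≥0) (j : Fin d) (c : ℝ) :
    (Measure.pi fun _ : Fin d => gaussianReal 0 V) {η : Fin d → ℝ | c < η j}
      = gaussianReal 0 V (Ioi c) := by
  classical
  have hset : {η : Fin d → ℝ | c < η j} = Function.eval j ⁻¹' (Ioi c) := rfl
  rw [hset, Set.eval_preimage, Measure.pi_pi]
  rw [Finset.prod_eq_single j (fun i _ hij => by simp [Function.update_of_ne hij])
    (fun h => absurd (Finset.mem_univ j) h)]
  simp

lemma measure_halfspace (d : ℕ) (hd : 0 < d) (V : ℝ≥0) (hV : V ≠ 0)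
    (v : EuclideanSpace ℝ (Fin d)) (hv : v ≠ 0) (t : ℝ) :
    (Measure.pi fun _ : Fin d => gaussianReal 0 V)
      {η : Fin d → ℝ | t < ⟪(EuclideanSpace.equiv (Fin d) ℝ).symm η, v⟫}
      = gaussianReal 0 V (Ioi (t / ‖v‖)) := by
  classical
  have hvnorm : (0:ℝ) < ‖v‖ := norm_pos_iff.mpr hv
  set j : Fin d := ⟨0, hd⟩
  set u : EuclideanSpace ℝ (Fin d) := (‖v‖ : ℝ) • EuclideanSpace.single j (1:ℝ) with hu_def
  have hnorm_u : ‖u‖ = ‖v‖ := by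
    rw [hu_def, norm_smul, EuclideanSpace.norm_single]
    simp [abs_of_nonneg hvnorm.le]
  set L : EuclideanSpace ℝ (Fin d) ≃ₗᵢ[ℝ] EuclideanSpace ℝ (Fin d) :=
    Submodule.reflection (ℝ ∙ (u - v))ᗮ with hL_def
  have hLu : L u = v := Submodule.reflection_sub hnorm_u
  set me := (MeasurableEquiv.toLp 2 (Fin d → ℝ)).symm with hme_def
  set T : (Fin d → ℝ) → (Fin d → ℝ) := fun η => me (L (me.symm η)) with hT_def
  have hT : MeasurePreserving T volume volume :=
    (EuclideanSpace.volume_preserving_symm_measurableEquiv_toLp (Fin d)).comp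
      ((L.measurePreserving).comp
        (EuclideanSpace.volume_preserving_symm_measurableEquiv_toLp (Fin d)).symm)
  set S : Set (Fin d → ℝ) := {η | t < ⟪(EuclideanSpace.equiv (Fin d) ℝ).symm η, v⟫}
    with hS_def
  have hcont : Continuous fun η : Fin d → ℝ => ⟪(EuclideanSpace.equiv (Fin d) ℝ).symm η, v⟫ :=
    Continuous.inner (EuclideanSpace.equiv (Fin d) ℝ).symm.continuous continuous_const
  have hSmeas : MeasurableSet S := measurableSet_lt measurable_const hcont.measurable
  have hpre : T ⁻¹' S = {η : Fin d → ℝ | t / ‖v‖ < η j} := by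
    ext η
    have h1 : me.symm (T η) = L (me.symm η) := by simp [hT_def]
    have h3 : ⟪(me.symm η : EuclideanSpace ℝ (Fin d)), EuclideanSpace.single j (1:ℝ)⟫
        = η j := by
      rw [EuclideanSpace.inner_single_right]
      show (1:ℝ) * (starRingEnd ℝ) (η j) = η j
      simp
    have h2 : ⟪(EuclideanSpace.equiv (Fin d) ℝ).symm (T η), v⟫ = ‖v‖ * η j := by
      calc ⟪(me.symm (T η) : EuclideanSpace ℝ (Fin d)), v⟫
          = ⟪L (me.symm η), v⟫ := by rw [h1]
        _ = ⟪L (me.symm η), L u⟫ := by rw [hLu]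
        _ = ⟪(me.symm η : EuclideanSpace ℝ (Fin d)), u⟫ := L.inner_map_map _ _
        _ = ‖v‖ * η j := by rw [hu_def, real_inner_smul_right, h3]
    simp only [Set.mem_preimage, hS_def, Set.mem_setOf_eq, h2]
    rw [div_lt_iff₀ hvnorm, mul_comm]
  set G : (Fin d → ℝ) → ℝ≥0∞ := fun x => ∏ i, gaussianPDF 0 V (x i) with hG_def
  have hGmeas : Measurable G :=
    Finset.measurable_prod _ fun i _ =>
      (measurable_gaussianPDF 0 V).comp (measurable_pi_apply i)
  have hGT : ∀ x, G (T x) = G x := by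
    intro x
    have hsum : ∀ z : Fin d → ℝ, ∑ i, (z i) ^ 2
        = ‖(me.symm z : EuclideanSpace ℝ (Fin d))‖ ^ 2 := by
      intro z
      rw [EuclideanSpace.norm_eq, Real.sq_sqrt (Finset.sum_nonneg fun i _ => sq_nonneg _)]
      simp only [Real.norm_eq_abs, sq_abs]
      rfl
    have h1 : me.symm (T x) = L (me.symm x) := by simp [hT_def]
    have h2 : ∑ i, (T x i) ^ 2 = ∑ i, (x i) ^ 2 := by
      rw [hsum, hsum, h1, L.norm_map]
    rw [hG_def]
    simp only
    rw [prod_gaussianPDF_eq, prod_gaussianPDF_eq, h2]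
  rw [pi_gaussian_eq_withDensity d V hV]
  show (volume : Measure (Fin d → ℝ)).withDensity G S = gaussianReal 0 V (Ioi (t / ‖v‖))
  rw [withDensity_apply _ hSmeas]
  have hchg : ∫⁻ x in S, G x ∂volume = ∫⁻ x in T ⁻¹' S, G x ∂volume := by
    rw [← hT.setLIntegral_comp_preimage hSmeas hGmeas]
    exact setLIntegral_congr_fun (hT.measurable hSmeas) (fun x _ => hGT x)
  rw [hchg, hpre]
  have hmeas2 : MeasurableSet {η : Fin d → ℝ | t / ‖v‖ < η j} :=
    measurableSet_lt measurable_const (measurable_pi_apply j)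
  rw [← withDensity_apply _ hmeas2, ← pi_gaussian_eq_withDensity d V hV,
    pi_gaussian_eval]

theorem gap_translation_increases_robustness_offset
    (d : ℕ) (hd : 0 < d) (s : ℝ≥0) (hs : 0 < s)
    (P : Measure (Fin d → ℝ))
    (hP : P = Measure.pi fun _ : Fin d => gaussianReal 0 (s ^ 2))
    (w y g : EuclideanSpace ℝ (Fin d)) (b : ℝ) (hb : 0 ≤ b)
    (hwy : b < ⟪w, y⟫) (hwg : ⟪w, g⟫ = 0)
    (hyg : y + g ≠ 0) (hnorm : ‖y + g‖ < ‖y‖) :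
    P {η : Fin d → ℝ | b < ⟪w + (EuclideanSpace.equiv (Fin d) ℝ).symm η, y⟫}
      < P {η : Fin d → ℝ | b < ⟪w + (EuclideanSpace.equiv (Fin d) ℝ).symm η, y + g⟫} := by
  subst hP
  have hV : (s ^ 2 : ℝ≥0) ≠ 0 := pow_ne_zero _ hs.ne'
  set t : ℝ := b - ⟪w, y⟫ with ht_def
  have htneg : t < 0 := sub_neg.mpr hwy
  have hyg' : (0:ℝ) < ‖y + g‖ := norm_pos_iff.mpr hyg
  have hy' : (0:ℝ) < ‖y‖ := hyg'.trans hnorm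
  have hy0 : y ≠ 0 := norm_pos_iff.mp hy'
  have hset1 : {η : Fin d → ℝ | b < ⟪w + (EuclideanSpace.equiv (Fin d) ℝ).symm η, y⟫}
      = {η : Fin d → ℝ | t < ⟪(EuclideanSpace.equiv (Fin d) ℝ).symm η, y⟫} := by
    ext η
    simp only [Set.mem_setOf_eq, inner_add_left, ht_def]
    constructor <;> intro h <;> linarith
  have hwyg : ⟪w, y + g⟫ = ⟪w, y⟫ := by rw [inner_add_right, hwg, add_zero]
  have hset2 : {η : Fin d → ℝ | b < ⟪w + (EuclideanSpace.equiv (Fin d) ℝ).symm η, y + g⟫}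
      = {η : Fin d → ℝ | t < ⟪(EuclideanSpace.equiv (Fin d) ℝ).symm η, y + g⟫} := by
    ext η
    simp only [Set.mem_setOf_eq, inner_add_left, hwyg, ht_def]
    constructor <;> intro h <;> linarith
  rw [hset1, hset2, measure_halfspace d hd _ hV y hy0 t,
    measure_halfspace d hd _ hV (y + g) hyg t]
  refine gaussian_Ioi_strict_anti _ hV ?_
  rw [div_lt_div_iff₀ hyg' hy']
  exact mul_lt_mul_of_neg_left hnorm htneg
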